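/- For every natural number d and every complex number w, the elementary factors satisfy E_d(w)·E_d(−w) = E_{⌊d/2⌋}(w²). -/

import Mathlib

/-- The Weierstrass elementary factor: `E 0 w = 1 - w` and
`E p w = (1 - w) * exp (∑_{k=1}^p w^k / k)` for `p ≥ 1`. -/
noncomputable def elemFactor (p : ℕ) (w : ℂ) : ℂ :=
  (1 - w) * Complex.exp (∑ k ∈ Finset.Icc 1 p, w ^ k / (k : ℂ))

lemma sum_key (d : ℕ) (w : ℂ) :
    (∑ k ∈ Finset.Icc 1 d, w ^ k / (k : ℂ)) + ∑ k ∈ Finset.Icc 1 d, (-w) ^ k / (k : ℂ)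
      = ∑ j ∈ Finset.Icc 1 (d / 2), (w ^ 2) ^ j / (j : ℂ) := by
  rw [← Finset.sum_add_distrib]
  have h1 : ∑ k ∈ Finset.Icc 1 d, (w ^ k / (k : ℂ) + (-w) ^ k / (k : ℂ))
      = ∑ k ∈ (Finset.Icc 1 d).filter (fun k => Even k),
          (w ^ k / (k : ℂ) + (-w) ^ k / (k : ℂ)) := by
    rw [Finset.sum_filter_of_ne]
    intro x _ hx
    by_contra hodd
    rw [Nat.not_even_iff_odd] at hodd
    rw [hodd.neg_pow] at hx
    exact hx (by ring)
  rw [h1]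
  refine Finset.sum_nbij' (fun k => k / 2) (fun j => 2 * j) ?_ ?_ ?_ ?_ ?_
  · intro a ha
    simp only [Finset.mem_filter, Finset.mem_Icc] at ha ⊢
    obtain ⟨⟨h1a, h2a⟩, he⟩ := ha
    constructor
    · obtain ⟨c, hc⟩ := he
      omega
    · exact Nat.div_le_div_right h2a
  · intro j hj
    simp only [Finset.mem_Icc] at hj
    simp only [Finset.mem_filter, Finset.mem_Icc]
    refine ⟨⟨by omega, ?_⟩, even_two_mul j⟩
    omega
  · intro a ha
    simp only [Finset.mem_filter, Finset.mem_Icc] at ha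
    obtain ⟨_, he⟩ := ha
    obtain ⟨c, hc⟩ := he
    omega
  · intro j _; omega
  · intro a ha
    simp only [Finset.mem_filter, Finset.mem_Icc] at ha
    obtain ⟨⟨h1a, _⟩, he⟩ := ha
    obtain ⟨c, hc⟩ := he
    subst hc
    have hc1 : 1 ≤ c := by omega
    have : (c + c) / 2 = c := by omega
    rw [this]
    rw [Even.neg_pow (by exact ⟨c, rfl⟩)]
    rw [← pow_mul]
    have h2 : 2 * c = c + c := by ring
    push_cast
    rw [← h2]
    have hc0 : (c : ℂ) ≠ 0 := by exact_mod_cast (by omega : c ≠ 0)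
    field_simp

/-- For every natural number `d` and every complex number `w`,
`E d w * E d (-w) = E (⌊d/2⌋) (w^2)`. -/
theorem elemFactor_mul_neg (d : ℕ) (w : ℂ) :
    elemFactor d w * elemFactor d (-w) = elemFactor (d / 2) (w ^ 2) := by
  unfold elemFactor
  rw [← sum_key d w, Complex.exp_add]
  ring
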